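/- Let α, β ∈ [0,1] and 0 < s ≤ t. For every real x with s ≤ x ≤ t, (1-α) + αx ≤ λ x^β, where λ = max{(1-α)t^{-β} + α t^{1-β}, (1-α)s^{-β} + α s^{1-β}}. -/

import Mathlib

/-- For `α, β ∈ [0,1]`, `0 < s ≤ t` and `s ≤ x ≤ t` one has `(1-α) + αx ≤ λ x^β` with
`λ = max{t^{-β} ∇_α t^{1-β}, s^{-β} ∇_α s^{1-β}}`. -/
theorem scalar_weighted_bound (α β s t x : ℝ) (hα0 : 0 ≤ α) (hα1 : α ≤ 1)
    (hβ0 : 0 ≤ β) (hβ1 : β ≤ 1) (hs : 0 < s) (hst : s ≤ t) (hsx : s ≤ x) (hxt : x ≤ t) :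
    (1 - α) + α * x ≤
      max ((1 - α) * t ^ (-β) + α * t ^ (1 - β)) ((1 - α) * s ^ (-β) + α * s ^ (1 - β))
        * x ^ β := by
  have ht : 0 < t := lt_of_lt_of_le hs hst
  set M := max ((1 - α) * t ^ (-β) + α * t ^ (1 - β)) ((1 - α) * s ^ (-β) + α * s ^ (1 - β))
    with hM
  have hM0 : 0 ≤ M := by
    have h1α : (0:ℝ) ≤ 1 - α := by linarith
    exact le_max_iff.mpr (Or.inr (add_nonneg (mul_nonneg h1α (by positivity))
      (mul_nonneg hα0 (by positivity))))
  -- endpoint identities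
  have hes : ((1 - α) * s ^ (-β) + α * s ^ (1 - β)) * s ^ β = (1 - α) + α * s := by
    rw [add_mul, mul_assoc, mul_assoc, ← Real.rpow_add hs, ← Real.rpow_add hs]
    norm_num
  have het : ((1 - α) * t ^ (-β) + α * t ^ (1 - β)) * t ^ β = (1 - α) + α * t := by
    rw [add_mul, mul_assoc, mul_assoc, ← Real.rpow_add ht, ← Real.rpow_add ht]
    norm_num
  have hesM : (1 - α) + α * s ≤ M * s ^ β := by
    rw [← hes]
    exact mul_le_mul_of_nonneg_right (le_max_right _ _) (by positivity)
  have hetM : (1 - α) + α * t ≤ M * t ^ β := by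
    rw [← het]
    exact mul_le_mul_of_nonneg_right (le_max_left _ _) (by positivity)
  rcases eq_or_lt_of_le hst with rfl | hstlt
  · have hx : x = s := le_antisymm hxt hsx
    subst hx; exact hesM
  · set a := (t - x) / (t - s) with ha
    set b := (x - s) / (t - s) with hb
    have hts : 0 < t - s := sub_pos.mpr hstlt
    have ha0 : 0 ≤ a := div_nonneg (by linarith) hts.le
    have hb0 : 0 ≤ b := div_nonneg (by linarith) hts.le
    have hab : a + b = 1 := by rw [ha, hb, ← add_div]; field_simp [hts.ne']; ring
    have hax : a * s + b * t = x := by rw [ha, hb]; field_simp; ring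
    have hconc := (Real.concaveOn_rpow hβ0 hβ1).2 (Set.mem_Ici.mpr hs.le)
      (Set.mem_Ici.mpr ht.le) ha0 hb0 hab
    simp only [smul_eq_mul, hax] at hconc
    have h1 : a * (M * s ^ β) + b * (M * t ^ β) ≤ M * x ^ β := by
      have := mul_le_mul_of_nonneg_left hconc hM0
      nlinarith
    have h2 : a * ((1 - α) + α * s) + b * ((1 - α) + α * t) ≤
        a * (M * s ^ β) + b * (M * t ^ β) :=
      add_le_add (mul_le_mul_of_nonneg_left hesM ha0) (mul_le_mul_of_nonneg_left hetM hb0)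
    calc (1 - α) + α * x = a * ((1 - α) + α * s) + b * ((1 - α) + α * t) := by
          rw [← hax]; nlinarith [hab]
      _ ≤ M * x ^ β := le_trans h2 h1
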